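/- Let d_0, d_1, …, d_n be positive reals, let M : {1,…,n} → ℝ be any function, and for 0 ≤ i < j ≤ n define s(i,j) = Σ_{k=i+1}^{j-1} d_k + max_{i ≤ k ≤ j-1} d_k and U(i,j) = s(i,j) + d_j. If i < a < b ≤ n and M(a) ≤ M(b), then max( M(a), U(i,a) ) ≤ max( M(b), U(i,b) ). Consequently, the index b can be safely ignored when minimizing j ↦ max( M(j), U(i,j) ) over i < j ≤ n. -/
import Mathlib


/-- `segSum d i j = Σ_{k=i+1}^{j-1} d_k`. -/
noncomputable def segSum (d : ℕ → ℝ) (i j : ℕ) : ℝ := ∑ k ∈ Finset.Ioo i j, d k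

/-- `segMax d i j = max_{i ≤ k ≤ j-1} d_k` (junk value `0` when `j ≤ i`). -/
noncomputable def segMax (d : ℕ → ℝ) (i j : ℕ) : ℝ :=
  if h : i < j then (Finset.Ico i j).sup' (Finset.nonempty_Ico.mpr h) d else 0

/-- `s(i,j) = Σ_{k=i+1}^{j-1} d_k + max_{i ≤ k ≤ j-1} d_k`. -/
noncomputable def sfun (d : ℕ → ℝ) (i j : ℕ) : ℝ := segSum d i j + segMax d i j

/-- `U(i,j) = s(i,j) + d_j`. -/
noncomputable def U (d : ℕ → ℝ) (i j : ℕ) : ℝ := sfun d i j + d j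

/-- Core inequality of Lemma 3: if `i < a < b ≤ n` and `M(a) ≤ M(b)`, then
`max(M(a), U(i,a)) ≤ max(M(b), U(i,b))`, so index `b` can be ignored when
minimizing `j ↦ max(M(j), U(i,j))` over `i < j ≤ n`. -/
theorem dominated_index_ignorable (n : ℕ) (d : ℕ → ℝ) (hd : ∀ k ≤ n, 0 < d k)
    (M : ℕ → ℝ) (i a b : ℕ) (hia : i < a) (hab : a < b) (hbn : b ≤ n)
    (hM : M a ≤ M b) :
    max (M a) (U d i a) ≤ max (M b) (U d i b) := by
  have hiab : i < b := hia.trans hab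
  have hsum : segSum d i a + d a ≤ segSum d i b := by
    have hsubset : Finset.Ioc i a ⊆ Finset.Ioo i b := by
      intro k hk
      simp only [Finset.mem_Ioc, Finset.mem_Ioo] at hk ⊢
      exact ⟨hk.1, lt_of_le_of_lt hk.2 hab⟩
    have h1 : ∑ k ∈ Finset.Ioc i a, d k = segSum d i a + d a := by
      rw [segSum, ← Finset.Ioo_insert_right hia, Finset.sum_insert (by simp)]
      ring
    rw [← h1]
    apply Finset.sum_le_sum_of_subset_of_nonneg hsubset
    intro k hk _
    exact (hd k (le_trans (le_of_lt (Finset.mem_Ioo.mp hk).2) hbn)).le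
  have hmax : segMax d i a ≤ segMax d i b := by
    rw [segMax, segMax, dif_pos hia, dif_pos hiab]
    apply Finset.sup'_le
    intro k hk
    apply Finset.le_sup'
    simp only [Finset.mem_Ico] at hk ⊢
    exact ⟨hk.1, hk.2.trans hab⟩
  have hU : U d i a ≤ U d i b := by
    have hdb : 0 < d b := hd b hbn
    simp only [U, sfun]
    nlinarith
  exact max_le_max hM hU
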